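/- Restriction on NH-graphs commutes with itself and interacts correctly with parallel composition: (x)(y)⟨η,G⟩ = (y)(x)⟨η,G⟩, and if x ∉ img(η₂) then (x)(⟨η₁,G₁⟩ ∥ ⟨η₂,G₂⟩) ≅ ((x)⟨η₁,G₁⟩) ∥ ⟨η₂,G₂⟩ (scope extension holds for NH-graphs). -/

import Mathlib

/-- A labeled (nominal) hypergraph: vertices, hyperedges with attached vertex
tuples and labels, and a partial naming function from vertices to names. -/
structure NHGraph (L : Type) where
  V : Type
  E : Type
  att : E → List V
  lab : E → L
  nm : V → Option ℕ

namespace NHGraph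

variable {L : Type}

/-- The naming function is a partial injection. -/
def InjNm (G : NHGraph L) : Prop :=
  ∀ v w x, G.nm v = some x → G.nm w = some x → v = w

/-- The hypergraph has no isolated vertices. -/
def NoIsolated (G : NHGraph L) : Prop :=
  ∀ v, ∃ e, v ∈ G.att e

/-- The interface: the set of names assigned to some vertex. -/
def interface (G : NHGraph L) : Set ℕ := {x | ∃ v, G.nm v = some x}

/-- Isomorphism of NH-graphs: a hypergraph isomorphism preserving labels and names. -/
def Iso (G₁ G₂ : NHGraph L) : Prop :=
  ∃ (f : G₁.V ≃ G₂.V) (g : G₁.E ≃ G₂.E),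
    (∀ e, G₂.att (g e) = (G₁.att e).map f) ∧
    (∀ e, G₂.lab (g e) = G₁.lab e) ∧
    (∀ v, G₂.nm (f v) = G₁.nm v)

/-- Action of a name permutation: rename the interface. -/
def permAct (G : NHGraph L) (π : Equiv.Perm ℕ) : NHGraph L :=
  { G with nm := fun v => (G.nm v).map π }

/-- Restriction: remove the name x from the interface. -/
def res (x : ℕ) (G : NHGraph L) : NHGraph L :=
  { G with nm := fun v => if G.nm v = some x then none else G.nm v }

/-- A vertex of G₂ shares an interface name with some vertex of G₁. -/
def Shared (G₁ G₂ : NHGraph L) (v₂ : G₂.V) : Prop :=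
  ∃ (v₁ : G₁.V) (x : ℕ), G₁.nm v₁ = some x ∧ G₂.nm v₂ = some x

open Classical in
/-- Parallel composition: disjoint union, gluing vertices with the same interface name. -/
noncomputable def par (G₁ G₂ : NHGraph L) : NHGraph L where
  V := {v : G₁.V ⊕ G₂.V // Sum.elim (fun _ => True) (fun v₂ => ¬ Shared G₁ G₂ v₂) v}
  E := G₁.E ⊕ G₂.E
  att := fun e =>
    Sum.elim
      (fun e₁ => (G₁.att e₁).map (fun v₁ =>
        (⟨Sum.inl v₁, trivial⟩ : {v : G₁.V ⊕ G₂.V // Sum.elim (fun _ => True) (fun v₂ => ¬ Shared G₁ G₂ v₂) v})))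
      (fun e₂ => (G₂.att e₂).map (fun v₂ =>
        if h : Shared G₁ G₂ v₂ then ⟨Sum.inl h.choose, trivial⟩ else ⟨Sum.inr v₂, h⟩)) e
  lab := Sum.elim G₁.lab G₂.lab
  nm := fun v => Sum.elim G₁.nm G₂.nm v.val

/-- The empty NH-graph (interpretation of nil). -/
def zero (L : Type) : NHGraph L :=
  ⟨Empty, Empty, fun e => e.elim, fun e => e.elim, fun v => v.elim⟩

end NHGraph

/-- The NH-graph denoted by an atomic term: one hyperedge with named vertices. -/
def atomG (A : ℕ) (xs : List ℕ) : NHGraph ℕ :=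
  ⟨Fin xs.length, Unit, fun _ => List.finRange xs.length, fun _ => A,
    fun i => some (xs.get i)⟩

/-- restriction on NH-graphs commutes with itself, and scope
extension holds: if x is not in the interface of G₂ then
(x)(G₁ ∥ G₂) ≅ ((x)G₁) ∥ G₂. -/
@[simp] lemma NHGraph.res_att {L : Type} (x : ℕ) (G : NHGraph L) :
    (NHGraph.res x G).att = G.att := rfl

@[simp] lemma NHGraph.res_lab {L : Type} (x : ℕ) (G : NHGraph L) :
    (NHGraph.res x G).lab = G.lab := rfl

lemma NHGraph.res_nm {L : Type} (x : ℕ) (G : NHGraph L) (v : G.V) :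
    (NHGraph.res x G).nm v = if G.nm v = some x then none else G.nm v := rfl

theorem res_comm_and_scopeExt {L : Type} (x y : ℕ) (G G₁ G₂ : NHGraph L)
    (h₁ : G₁.InjNm) (h₂ : G₂.InjNm) (hx : x ∉ G₂.interface) :
    NHGraph.res x (NHGraph.res y G) = NHGraph.res y (NHGraph.res x G) ∧
    (NHGraph.res x (G₁.par G₂)).Iso ((NHGraph.res x G₁).par G₂) := by
  constructor
  · -- restriction commutes with itself
    cases G with
    | mk V E att lab nm =>
      simp only [NHGraph.res]
      congr 1
      funext v
      split_ifs <;> simp_all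
  · -- scope extension
    have hshared : ∀ v₂ : G₂.V,
        NHGraph.Shared G₁ G₂ v₂ ↔ NHGraph.Shared (NHGraph.res x G₁) G₂ v₂ := by
      intro v₂
      constructor
      · rintro ⟨v₁, c, ha, hb⟩
        refine ⟨v₁, c, ?_, hb⟩
        have hcx : c ≠ x := fun h => hx ⟨v₂, h ▸ hb⟩
        rw [NHGraph.res_nm, ha, if_neg (by simp [hcx])]
      · rintro ⟨v₁, c, ha, hb⟩
        refine ⟨v₁, c, ?_, hb⟩
        change (if G₁.nm v₁ = some x then none else G₁.nm v₁) = some c at ha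
        by_cases h : G₁.nm v₁ = some x
        · simp [h] at ha
        · simpa [h] using ha
    have hpred : ∀ v : G₁.V ⊕ G₂.V,
        Sum.elim (fun _ => True) (fun v₂ => ¬ NHGraph.Shared G₁ G₂ v₂) v ↔
        Sum.elim (fun _ => True) (fun v₂ => ¬ NHGraph.Shared (NHGraph.res x G₁) G₂ v₂) v := by
      intro v
      cases v with
      | inl v₁ => simp
      | inr v₂ => simp [hshared v₂]
    refine ⟨Equiv.subtypeEquivRight hpred, Equiv.refl _, ?_, ?_, ?_⟩
    · intro e
      cases e with
      | inl e₁ =>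
        show _ = List.map _ ((G₁.par G₂).att (Sum.inl e₁))
        simp only [NHGraph.par, Sum.elim_inl, Equiv.refl_apply, List.map_map]
        refine Eq.trans ?_ (List.map_map ..).symm
        rfl
      | inr e₂ =>
        show _ = List.map _ ((G₁.par G₂).att (Sum.inr e₂))
        simp only [NHGraph.par, Sum.elim_inr, Equiv.refl_apply, List.map_map]
        refine Eq.trans ?_ (List.map_map ..).symm
        apply List.map_congr_left
        intro v₂ _
        show _ = Equiv.subtypeEquivRight hpred _; beta_reduce
        by_cases h : NHGraph.Shared G₁ G₂ v₂
        · have h' : NHGraph.Shared (NHGraph.res x G₁) G₂ v₂ := (hshared v₂).mp h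
          rw [dif_pos h, dif_pos h']
          apply Subtype.ext
          simp only [Equiv.subtypeEquivRight_apply]
          congr 1
          obtain ⟨c, hc1, hc2⟩ := h.choose_spec
          obtain ⟨c', hc1', hc2'⟩ := h'.choose_spec
          have hcc : c = c' := Option.some_inj.mp (hc2.symm.trans hc2')
          change (if G₁.nm h'.choose = some x then none else G₁.nm h'.choose) = some c' at hc1'
          have hG1' : G₁.nm h'.choose = some c := by
            by_cases hh : G₁.nm h'.choose = some x
            · simp [hh] at hc1'
            · rw [hcc]; simpa [hh] using hc1'
          exact (h₁ _ _ c hc1 hG1').symm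
        · have h' : ¬ NHGraph.Shared (NHGraph.res x G₁) G₂ v₂ :=
            fun hh => h ((hshared v₂).mpr hh)
          rw [dif_neg h, dif_neg h']
          rfl
    · intro e; cases e <;> rfl
    · rintro ⟨v, hv⟩
      cases v with
      | inl v₁ => rfl
      | inr v₂ =>
        have hne : G₂.nm v₂ ≠ some x := fun h => hx ⟨v₂, h⟩
        show G₂.nm v₂ = if G₂.nm v₂ = some x then none else G₂.nm v₂
        rw [if_neg hne]
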